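/- Let p ∈ ℝ² and let Q, R be finite subsets of ℝ² such that p₁ > r₁ and q₁ > r₁ for every q ∈ Q and r ∈ R, and p₂ > q₂ for every q ∈ Q (the first coordinate separates {p} ∪ Q from R, and the second coordinate separates p from Q). Then for all targets t₁, t₂, t₃ ∈ ℝ and every ε > 0 there exists a two-hidden-layer logistic network N : ℝ² → ℝ such that |N(p) − t₁| < ε, |N(q) − t₂| < ε for every q ∈ Q, and |N(r) − t₃| < ε for every r ∈ R. (The neural implementation of a triple basis extends to set-triples: the network assigns a distinguished value to the chosen item, a common value to the rest of the choice set, and a common value to all outside items.) -/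

import Mathlib

/-- The logistic sigmoid `σ(t) = 1 / (1 + exp (−t))`. -/
noncomputable def sigmoid (t : ℝ) : ℝ := 1 / (1 + Real.exp (-t))

/-- A fully connected network `ℝ² → ℝ` with two hidden layers of two logistic units each
and a linear output unit. -/
noncomputable def twoLayerNet (a₁ a₂ a₃ a₄ : ℝ × ℝ) (β₁ β₂ β₃ β₄ c₀ c₁ c₂ : ℝ)
    (z : ℝ × ℝ) : ℝ :=
  let h₁ := sigmoid (a₁.1 * z.1 + a₁.2 * z.2 + β₁)
  let h₂ := sigmoid (a₂.1 * z.1 + a₂.2 * z.2 + β₂)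
  c₁ * sigmoid (a₃.1 * h₁ + a₃.2 * h₂ + β₃) +
    c₂ * sigmoid (a₄.1 * h₁ + a₄.2 * h₂ + β₄) + c₀

open Filter Topology

lemma sigmoid_pos (t : ℝ) : 0 < sigmoid t := by
  unfold sigmoid; positivity

lemma sigmoid_lt_one (t : ℝ) : sigmoid t < 1 := by
  unfold sigmoid
  rw [div_lt_one (by positivity)]
  linarith [Real.exp_pos (-t)]

lemma sigmoid_tendsto_one : Tendsto sigmoid atTop (𝓝 1) := by
  have h : Tendsto (fun t : ℝ => Real.exp (-t)) atTop (𝓝 0) :=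
    Real.tendsto_exp_atBot.comp tendsto_neg_atTop_atBot
  have h2 : Tendsto (fun t : ℝ => (1 + Real.exp (-t))⁻¹) atTop (𝓝 ((1+0:ℝ)⁻¹)) :=
    (tendsto_const_nhds.add h).inv₀ (by norm_num)
  simp only [add_zero, inv_one] at h2
  exact h2.congr fun t => by simp [sigmoid, one_div]

lemma sigmoid_tendsto_zero : Tendsto sigmoid atBot (𝓝 0) := by
  have h : Tendsto (fun t : ℝ => 1 + Real.exp (-t)) atBot atTop := by
    apply tendsto_atTop_add_const_left
    exact Real.tendsto_exp_atTop.comp tendsto_neg_atBot_atTop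
  have h2 := h.inv_tendsto_atTop
  exact h2.congr fun t => by simp [sigmoid, one_div, Pi.inv_apply]

lemma sig_mul_pos {c : ℝ} (hc : 0 < c) :
    Tendsto (fun k : ℝ => sigmoid (k * c)) atTop (𝓝 1) :=
  sigmoid_tendsto_one.comp (tendsto_id.atTop_mul_const hc)

lemma sig_mul_neg {c : ℝ} (hc : c < 0) :
    Tendsto (fun k : ℝ => sigmoid (k * c)) atTop (𝓝 0) :=
  sigmoid_tendsto_zero.comp (tendsto_id.atTop_mul_const_of_neg hc)

/-- The scaled network. -/
noncomputable def netF (θ₁ θ₂ t₁ t₂ t₃ k : ℝ) (z : ℝ × ℝ) : ℝ :=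
  twoLayerNet (k, 0) (0, k) (k, 0) (k, k) (-(k*θ₁)) (-(k*θ₂)) (-(k/2)) (-(3*k/2))
    t₃ (t₂ - t₃) (t₁ - t₂) z

lemma netF_eq (θ₁ θ₂ t₁ t₂ t₃ k : ℝ) (z : ℝ × ℝ) :
    netF θ₁ θ₂ t₁ t₂ t₃ k z =
      (t₂ - t₃) * sigmoid (k * (sigmoid (k * (z.1 - θ₁)) - 1/2)) +
      (t₁ - t₂) * sigmoid (k * (sigmoid (k * (z.1 - θ₁)) + sigmoid (k * (z.2 - θ₂)) - 3/2))
      + t₃ := by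
  unfold netF twoLayerNet
  simp only
  ring_nf

lemma netF_tendsto_p (θ₁ θ₂ t₁ t₂ t₃ : ℝ) (z : ℝ × ℝ) (h1 : θ₁ < z.1) (h2 : θ₂ < z.2) :
    Tendsto (fun k => netF θ₁ θ₂ t₁ t₂ t₃ k z) atTop (𝓝 t₁) := by
  have hs1 : Tendsto (fun k : ℝ => sigmoid (k * (z.1 - θ₁))) atTop (𝓝 1) :=
    sig_mul_pos (by linarith)
  have hs2 : Tendsto (fun k : ℝ => sigmoid (k * (z.2 - θ₂))) atTop (𝓝 1) :=
    sig_mul_pos (by linarith)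
  have hu : Tendsto (fun k : ℝ => sigmoid (k * (sigmoid (k * (z.1 - θ₁)) - 1/2)))
      atTop (𝓝 1) := by
    refine sigmoid_tendsto_one.comp (Filter.Tendsto.atTop_mul_pos (C := 1/2) (by norm_num)
      tendsto_id ?_)
    have := hs1.sub_const (1/2:ℝ)
    norm_num at this ⊢
    exact this
  have hv : Tendsto (fun k : ℝ =>
      sigmoid (k * (sigmoid (k * (z.1 - θ₁)) + sigmoid (k * (z.2 - θ₂)) - 3/2)))
      atTop (𝓝 1) := by
    refine sigmoid_tendsto_one.comp (Filter.Tendsto.atTop_mul_pos (C := 1/2) (by norm_num)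
      tendsto_id ?_)
    have := (hs1.add hs2).sub_const (3/2:ℝ)
    norm_num at this ⊢
    exact this
  have := (((hu.const_mul (t₂ - t₃)).add (hv.const_mul (t₁ - t₂))).add_const t₃)
  simp only [mul_one] at this
  have heq : (t₂ - t₃) * 1 + (t₁ - t₂) * 1 + t₃ = t₁ := by ring
  rw [show (t₂ - t₃) + (t₁ - t₂) + t₃ = t₁ by ring] at this
  exact this.congr fun k => (netF_eq θ₁ θ₂ t₁ t₂ t₃ k z).symm

lemma netF_tendsto_q (θ₁ θ₂ t₁ t₂ t₃ : ℝ) (z : ℝ × ℝ) (h1 : θ₁ < z.1) (h2 : z.2 < θ₂) :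
    Tendsto (fun k => netF θ₁ θ₂ t₁ t₂ t₃ k z) atTop (𝓝 t₂) := by
  have hs1 : Tendsto (fun k : ℝ => sigmoid (k * (z.1 - θ₁))) atTop (𝓝 1) :=
    sig_mul_pos (by linarith)
  have hs2 : Tendsto (fun k : ℝ => sigmoid (k * (z.2 - θ₂))) atTop (𝓝 0) :=
    sig_mul_neg (by linarith)
  have hu : Tendsto (fun k : ℝ => sigmoid (k * (sigmoid (k * (z.1 - θ₁)) - 1/2)))
      atTop (𝓝 1) := by
    refine sigmoid_tendsto_one.comp (Filter.Tendsto.atTop_mul_pos (C := 1/2) (by norm_num)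
      tendsto_id ?_)
    have := hs1.sub_const (1/2:ℝ)
    norm_num at this ⊢
    exact this
  have hv : Tendsto (fun k : ℝ =>
      sigmoid (k * (sigmoid (k * (z.1 - θ₁)) + sigmoid (k * (z.2 - θ₂)) - 3/2)))
      atTop (𝓝 0) := by
    refine sigmoid_tendsto_zero.comp (Filter.Tendsto.atTop_mul_neg (C := -(1/2))
      (by norm_num) tendsto_id ?_)
    have := (hs1.add hs2).sub_const (3/2:ℝ)
    norm_num at this ⊢
    exact this
  have := (((hu.const_mul (t₂ - t₃)).add (hv.const_mul (t₁ - t₂))).add_const t₃)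
  rw [show (t₂ - t₃) * 1 + (t₁ - t₂) * 0 + t₃ = t₂ by ring] at this
  exact this.congr fun k => (netF_eq θ₁ θ₂ t₁ t₂ t₃ k z).symm

lemma netF_tendsto_r (θ₁ θ₂ t₁ t₂ t₃ : ℝ) (z : ℝ × ℝ) (h1 : z.1 < θ₁) :
    Tendsto (fun k => netF θ₁ θ₂ t₁ t₂ t₃ k z) atTop (𝓝 t₃) := by
  have hs1 : Tendsto (fun k : ℝ => sigmoid (k * (z.1 - θ₁))) atTop (𝓝 0) :=
    sig_mul_neg (by linarith)
  have hu : Tendsto (fun k : ℝ => sigmoid (k * (sigmoid (k * (z.1 - θ₁)) - 1/2)))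
      atTop (𝓝 0) := by
    refine sigmoid_tendsto_zero.comp (Filter.Tendsto.atTop_mul_neg (C := -(1/2))
      (by norm_num) tendsto_id ?_)
    have := hs1.sub_const (1/2:ℝ)
    norm_num at this ⊢
    exact this
  have harg : Tendsto (fun k : ℝ =>
      k * (sigmoid (k * (z.1 - θ₁)) + sigmoid (k * (z.2 - θ₂)) - 3/2)) atTop atBot := by
    have hbound : Tendsto (fun k : ℝ => k * (-(1/4) : ℝ)) atTop atBot :=
      tendsto_id.atTop_mul_const_of_neg (by norm_num)
    refine tendsto_atBot_mono' atTop ?_ hbound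
    filter_upwards [hs1.eventually_lt_const (by norm_num : (0:ℝ) < 1/4),
      eventually_ge_atTop (0:ℝ)] with k hk1 hk0
    have h2lt := sigmoid_lt_one (k * (z.2 - θ₂))
    have : sigmoid (k * (z.1 - θ₁)) + sigmoid (k * (z.2 - θ₂)) - 3/2 ≤ -(1/4) := by
      linarith
    exact mul_le_mul_of_nonneg_left this hk0
  have hv := sigmoid_tendsto_zero.comp harg
  have := (((hu.const_mul (t₂ - t₃)).add (hv.const_mul (t₁ - t₂))).add_const t₃)
  rw [show (t₂ - t₃) * 0 + (t₁ - t₂) * 0 + t₃ = t₃ by ring] at this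
  exact this.congr fun k => (netF_eq θ₁ θ₂ t₁ t₂ t₃ k z).symm

/-- the neural implementation of a triple basis extends to set-triples:
if the first coordinate separates `{p} ∪ Q` from `R` and the second separates `p` from `Q`,
a two-hidden-layer logistic network assigns a distinguished value to `p`, a common value to
`Q`, and a common value to `R`, all to arbitrary precision. -/
theorem stmt10 (p : ℝ × ℝ) (Q R : Finset (ℝ × ℝ))
    (hpR : ∀ r ∈ R, r.1 < p.1)
    (hQR : ∀ q ∈ Q, ∀ r ∈ R, r.1 < q.1)
    (hpQ : ∀ q ∈ Q, q.2 < p.2) :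
    ∀ t₁ t₂ t₃ : ℝ, ∀ ε > (0 : ℝ),
      ∃ a₁ a₂ a₃ a₄ : ℝ × ℝ, ∃ β₁ β₂ β₃ β₄ c₀ c₁ c₂ : ℝ,
        |twoLayerNet a₁ a₂ a₃ a₄ β₁ β₂ β₃ β₄ c₀ c₁ c₂ p - t₁| < ε ∧
        (∀ q ∈ Q, |twoLayerNet a₁ a₂ a₃ a₄ β₁ β₂ β₃ β₄ c₀ c₁ c₂ q - t₂| < ε) ∧
        (∀ r ∈ R, |twoLayerNet a₁ a₂ a₃ a₄ β₁ β₂ β₃ β₄ c₀ c₁ c₂ r - t₃| < ε) := by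
  intro t₁ t₂ t₃ ε hε
  -- choose thresholds
  set S₁ : Finset ℝ := insert p.1 (Q.image Prod.fst) with hS₁
  have hS₁ne : S₁.Nonempty := ⟨p.1, Finset.mem_insert_self _ _⟩
  set m₁ : ℝ := S₁.min' hS₁ne with hm₁
  set M₁ : ℝ := (insert (m₁ - 1) (R.image Prod.fst)).max' ⟨m₁-1, Finset.mem_insert_self _ _⟩
    with hM₁
  have hM₁lt : M₁ < m₁ := by
    rw [hM₁]
    apply Finset.max'_lt_iff _ _ |>.2
    intro y hy
    rcases Finset.mem_insert.1 hy with h | h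
    · simpa [h] using (by linarith : m₁ - 1 < m₁)
    · rcases Finset.mem_image.1 h with ⟨r, hr, rfl⟩
      have h1 : r.1 < p.1 := hpR r hr
      have h2 : ∀ q ∈ Q, r.1 < q.1 := fun q hq => hQR q hq r hr
      have : ∀ x ∈ S₁, r.1 < x := by
        intro x hx
        rcases Finset.mem_insert.1 hx with rfl | hx
        · exact h1
        · rcases Finset.mem_image.1 hx with ⟨q, hq, rfl⟩
          exact h2 q hq
      exact lt_of_lt_of_le (this m₁ (S₁.min'_mem hS₁ne)) le_rfl
  set θ₁ : ℝ := (M₁ + m₁) / 2 with hθ₁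
  have hθ₁gt : M₁ < θ₁ := by rw [hθ₁]; linarith
  have hθ₁lt : θ₁ < m₁ := by rw [hθ₁]; linarith
  set M₂ : ℝ := (insert (p.2 - 1) (Q.image Prod.snd)).max' ⟨p.2-1, Finset.mem_insert_self _ _⟩
    with hM₂
  have hM₂lt : M₂ < p.2 := by
    rw [hM₂]
    apply Finset.max'_lt_iff _ _ |>.2
    intro y hy
    rcases Finset.mem_insert.1 hy with h | h
    · simpa [h] using (by linarith : p.2 - 1 < p.2)
    · rcases Finset.mem_image.1 h with ⟨q, hq, rfl⟩
      exact hpQ q hq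
  set θ₂ : ℝ := (M₂ + p.2) / 2 with hθ₂
  have hθ₂gt : M₂ < θ₂ := by rw [hθ₂]; linarith
  have hθ₂lt : θ₂ < p.2 := by rw [hθ₂]; linarith
  -- coordinates vs thresholds
  have hp1 : θ₁ < p.1 := lt_of_lt_of_le hθ₁lt (Finset.min'_le _ _ (Finset.mem_insert_self _ _))
  have hq1 : ∀ q ∈ Q, θ₁ < q.1 := fun q hq =>
    lt_of_lt_of_le hθ₁lt (Finset.min'_le _ _ (Finset.mem_insert_of_mem
      (Finset.mem_image_of_mem _ hq)))
  have hq2 : ∀ q ∈ Q, q.2 < θ₂ := fun q hq =>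
    lt_of_le_of_lt (Finset.le_max' _ _ (Finset.mem_insert_of_mem
      (Finset.mem_image_of_mem _ hq))) hθ₂gt
  have hr1 : ∀ r ∈ R, r.1 < θ₁ := fun r hr =>
    lt_of_le_of_lt (Finset.le_max' _ _ (Finset.mem_insert_of_mem
      (Finset.mem_image_of_mem _ hr))) hθ₁gt
  -- eventual closeness
  have hball : Metric.ball (t₁ : ℝ) ε ∈ 𝓝 t₁ := Metric.ball_mem_nhds _ hε
  have Ep : ∀ᶠ k in atTop, |netF θ₁ θ₂ t₁ t₂ t₃ k p - t₁| < ε := by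
    have := (netF_tendsto_p θ₁ θ₂ t₁ t₂ t₃ p hp1 hθ₂lt).eventually
      (Metric.ball_mem_nhds t₁ hε)
    simpa [Metric.mem_ball, Real.dist_eq] using this
  have EQ : ∀ᶠ k in atTop, ∀ q ∈ Q, |netF θ₁ θ₂ t₁ t₂ t₃ k q - t₂| < ε := by
    rw [Filter.eventually_all_finset]
    intro q hq
    have := (netF_tendsto_q θ₁ θ₂ t₁ t₂ t₃ q (hq1 q hq) (hq2 q hq)).eventually
      (Metric.ball_mem_nhds t₂ hε)
    simpa [Metric.mem_ball, Real.dist_eq] using this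
  have ER : ∀ᶠ k in atTop, ∀ r ∈ R, |netF θ₁ θ₂ t₁ t₂ t₃ k r - t₃| < ε := by
    rw [Filter.eventually_all_finset]
    intro r hr
    have := (netF_tendsto_r θ₁ θ₂ t₁ t₂ t₃ r (hr1 r hr)).eventually
      (Metric.ball_mem_nhds t₃ hε)
    simpa [Metric.mem_ball, Real.dist_eq] using this
  obtain ⟨k, hk⟩ := (Ep.and (EQ.and ER)).exists
  exact ⟨(k, 0), (0, k), (k, 0), (k, k), -(k*θ₁), -(k*θ₂), -(k/2), -(3*k/2),
    t₃, t₂ - t₃, t₁ - t₂, hk.1, hk.2.1, hk.2.2⟩
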